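/- Let A = diag(A₁,…,A_n) be a diagonal invertible matrix and for vectors q, v ∈ ℝⁿ define ω = q ∧ v := q·vᵀ − v·qᵀ and let 𝓘 act on so(n) by 𝓘(E_i ∧ E_j) = (A_i A_j / det A) E_i ∧ E_j. Then ⟨𝓘(q ∧ v), q ∧ v⟩ = (1/det A)[(Aq,q)(Av,v) − (Aq,v)²], where ⟨X,Y⟩ = −(1/2) tr(XY) is the Killing-type inner product on so(n). -/

import Mathlib

open Matrix

/-- `x ∧ y = x·yᵀ - y·xᵀ` as an `n×n` matrix. -/
noncomputable def wedge {n : ℕ} (x y : Fin n → ℝ) : Matrix (Fin n) (Fin n) ℝ :=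
  vecMulVec x y - vecMulVec y x

lemma trace_vmv {n : ℕ} (x y q v : Fin n → ℝ) :
    (vecMulVec x y * vecMulVec q v).trace = (y ⬝ᵥ q) * (v ⬝ᵥ x) := by
  simp only [Matrix.trace, Matrix.diag, Matrix.mul_apply, Matrix.vecMulVec_apply, dotProduct,
    Finset.sum_mul_sum]
  rw [Finset.sum_comm]
  congr 1; ext i; congr 1; ext j; ring

lemma trace_wedge_mul {n : ℕ} (x y q v : Fin n → ℝ) :
    (wedge x y * wedge q v).trace =
      2 * ((y ⬝ᵥ q) * (v ⬝ᵥ x) - (y ⬝ᵥ v) * (q ⬝ᵥ x)) := by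
  simp only [wedge, Matrix.sub_mul, Matrix.mul_sub, Matrix.trace_sub, trace_vmv]
  simp only [dotProduct_comm v x, dotProduct_comm q y, dotProduct_comm q x, dotProduct_comm v y]
  ring

lemma wedge_decomp {n : ℕ} (q v : Fin n → ℝ) :
    wedge q v = ∑ i, ∑ j, (q i * v j) • wedge (Pi.single i 1) (Pi.single j 1) := by
  ext k l
  simp only [wedge, Matrix.sub_apply, Matrix.vecMulVec_apply, Matrix.sum_apply,
    Matrix.smul_apply, smul_eq_mul, Pi.single_apply, mul_ite, ite_mul, mul_one, one_mul,
    mul_zero, zero_mul, mul_sub, Finset.sum_sub_distrib]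
  simp [Finset.sum_ite_eq', Finset.sum_ite_eq, mul_comm]

theorem kinetic_energy_special_inertia (n : ℕ) (a : Fin n → ℝ)
    (A : Matrix (Fin n) (Fin n) ℝ) (hA : A = Matrix.diagonal a) (hdet : A.det ≠ 0)
    (𝓘 : Matrix (Fin n) (Fin n) ℝ →ₗ[ℝ] Matrix (Fin n) (Fin n) ℝ)
    (h𝓘 : ∀ i j : Fin n, 𝓘 (wedge (Pi.single i 1) (Pi.single j 1)) =
      (a i * a j / A.det) • wedge (Pi.single i 1) (Pi.single j 1))
    (q v : Fin n → ℝ) :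
    -(1/2) * (𝓘 (wedge q v) * wedge q v).trace =
      (1 / A.det) *
        ((A.mulVec q ⬝ᵥ q) * (A.mulVec v ⬝ᵥ v) - (A.mulVec q ⬝ᵥ v) ^ 2) := by
  have hAq : A.mulVec q = fun i => a i * q i := by
    funext i; simp [hA, Matrix.mulVec_diagonal]
  have hAv : A.mulVec v = fun i => a i * v i := by
    funext i; simp [hA, Matrix.mulVec_diagonal]
  have hI : 𝓘 (wedge q v) = (A.det)⁻¹ • wedge (A.mulVec q) (A.mulVec v) := by
    rw [wedge_decomp q v, map_sum]
    rw [wedge_decomp (A.mulVec q) (A.mulVec v), Finset.smul_sum]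
    congr 1; funext i
    rw [map_sum, Finset.smul_sum]
    congr 1; funext j
    rw [_root_.map_smul, h𝓘, smul_smul, smul_smul, hAq, hAv]
    congr 1
    field_simp
  rw [hI, Matrix.smul_mul, Matrix.trace_smul, smul_eq_mul, trace_wedge_mul]
  have h1 : A.mulVec v ⬝ᵥ q = A.mulVec q ⬝ᵥ v := by
    simp [hAq, hAv, dotProduct]; congr 1; funext i; ring
  have h2 : v ⬝ᵥ A.mulVec q = A.mulVec q ⬝ᵥ v := dotProduct_comm _ _
  have h3 : q ⬝ᵥ A.mulVec q = A.mulVec q ⬝ᵥ q := dotProduct_comm _ _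
  have h4 : A.mulVec v ⬝ᵥ v = A.mulVec v ⬝ᵥ v := rfl
  rw [h1, h2, h3]
  field_simp
  ring
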